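/- There exist universal constants such that for every unit vector v ∈ ℝ^n, every ε-biased distribution D over {−1,1}^n, and every t ≥ 1, Pr_{x∼D}[|⟨v,x⟩| > t] ≤ 2·exp(−t²/4) + ‖v‖_0^{t²} · ε, where ‖v‖_0 denotes the number of nonzero coordinates of v. -/

import Mathlib

open Finset

/-- The map sending a boolean to the corresponding sign `±1`. -/
noncomputable def pm (b : Bool) : ℝ := if b then 1 else -1

lemma pm_cases (b : Bool) : pm b = 1 ∨ pm b = -1 := by cases b <;> simp [pm]

lemma pm_not (b : Bool) : pm (!b) = - pm b := by cases b <;> simp [pm]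

lemma abs_pm (b : Bool) : |pm b| = 1 := by rcases pm_cases b with h | h <;> simp [h]

lemma pm_pow (b : Bool) (c : ℕ) : pm b ^ c = if Even c then 1 else pm b := by
  rcases pm_cases b with h | h <;> rw [h]
  · simp
  · by_cases hc : Even c
    · simp [hc, Even.neg_one_pow hc]
    · simp only [hc, if_false]; exact Odd.neg_one_pow (Nat.not_even_iff_odd.mp hc)

def odf : ℕ → ℕ
  | 0 => 1
  | (m+1) => (2*m+1) * odf m

lemma odf_pos (m : ℕ) : 0 < odf m := by
  induction m with
  | zero => simp [odf]
  | succ m ih => simp only [odf]; exact Nat.mul_pos (by omega) ih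

lemma odf_cast (m : ℕ) : (odf m : ℚ) = (2*m).factorial / (2^m * m.factorial) := by
  induction m with
  | zero => simp [odf]
  | succ m ih =>
    have h2 : 2*(m+1) = (2*m+1)+1 := by ring
    rw [odf, h2]
    have h1 : (m.factorial : ℚ) ≠ 0 := Nat.cast_ne_zero.mpr (Nat.factorial_ne_zero _)
    have h3 : (2:ℚ)^m ≠ 0 := by positivity
    push_cast [ih, Nat.factorial_succ]
    field_simp
    ring

lemma comb_eq (l r : ℕ) :
    Nat.choose (2*l+2*r) (2*l) * odf l * odf r = odf (l+r) * Nat.choose (l+r) l := by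
  have := @Nat.cast_injective ℚ _ _
  apply this
  have hc1 : ((2*l+2*r).choose (2*l) : ℚ) = (2*l+2*r).factorial / ((2*l).factorial * (2*r).factorial) :=
    Nat.cast_add_choose ℚ
  have hc2 : ((l+r).choose l : ℚ) = (l+r).factorial / (l.factorial * r.factorial) :=
    Nat.cast_add_choose ℚ
  have e1 : 2*(l+r) = 2*l+2*r := by ring
  push_cast [hc1, hc2, odf_cast, e1]
  have f1 : (l.factorial : ℚ) ≠ 0 := Nat.cast_ne_zero.mpr (Nat.factorial_ne_zero _)
  have f2 : (r.factorial : ℚ) ≠ 0 := Nat.cast_ne_zero.mpr (Nat.factorial_ne_zero _)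
  have f3 : ((2*l).factorial : ℚ) ≠ 0 := Nat.cast_ne_zero.mpr (Nat.factorial_ne_zero _)
  have f4 : ((2*r).factorial : ℚ) ≠ 0 := Nat.cast_ne_zero.mpr (Nat.factorial_ne_zero _)
  field_simp
  ring

lemma comb_le (m l : ℕ) (h : l ≤ m) :
    Nat.choose (2*m) (2*l) * odf l ≤ odf m * Nat.choose m l := by
  obtain ⟨r, rfl⟩ := Nat.exists_eq_add_of_le h
  calc Nat.choose (2*(l+r)) (2*l) * odf l
      ≤ Nat.choose (2*(l+r)) (2*l) * odf l * odf r :=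
        Nat.le_mul_of_pos_right _ (odf_pos r)
    _ = odf (l+r) * Nat.choose (l+r) l := by
        rw [← comb_eq]; ring_nf

lemma exp_neg_half_ge : (1:ℝ)/2 ≤ Real.exp (-(1/2) : ℝ) := by
  have h : Real.exp ((1:ℝ)/2) ≤ 2 := by
    have := Real.log_two_gt_d9
    calc Real.exp ((1:ℝ)/2) ≤ Real.exp (Real.log 2) := by
          apply Real.exp_le_exp.mpr; linarith
      _ = 2 := Real.exp_log (by norm_num)
  have hpos : 0 < Real.exp ((1:ℝ)/2) := Real.exp_pos _
  rw [Real.exp_neg]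
  rw [le_inv_comm₀ (by norm_num) hpos]
  linarith

lemma odf_le_real (m : ℕ) (hm : 1 ≤ m) :
    (odf m : ℝ) ≤ (2*(m:ℝ))^m * Real.exp (-(m:ℝ)/2) := by
  induction m, hm using Nat.le_induction with
  | base =>
    have : (odf 1 : ℝ) = 1 := by norm_num [odf]
    rw [this]
    have := exp_neg_half_ge
    have : ((2:ℝ)*(1:ℕ))^(1:ℕ) * Real.exp (-((1:ℕ):ℝ)/2) = 2 * Real.exp (-(1/2):ℝ) := by
      norm_num
    rw [this]
    linarith
  | succ m hm ih =>
    have hodf : (odf (m+1) : ℝ) = (2*(m:ℝ)+1) * (odf m : ℝ) := by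
      show ((odf (m+1) : ℕ) : ℝ) = _
      rw [odf]; push_cast; ring
    have hmpos : (0:ℝ) < m := by exact_mod_cast hm
    have key : (2:ℝ)*(2*(m:ℝ))^m ≤ (2*(m:ℝ)+2)^m := by
      have hb : (1:ℝ) + (m:ℝ) * (1/(m:ℝ)) ≤ (1 + 1/(m:ℝ))^m := by
        apply one_add_mul_le_pow
        have : (0:ℝ) < 1/(m:ℝ) := by positivity
        linarith
      have hb2 : (2:ℝ) ≤ (1 + 1/(m:ℝ))^m := by
        rw [mul_one_div, div_self (ne_of_gt hmpos)] at hb; linarith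
      have hfact : (2*(m:ℝ)+2)^m = (2*(m:ℝ))^m * (1 + 1/(m:ℝ))^m := by
        rw [← mul_pow]
        congr 1
        field_simp
      rw [hfact]
      have hp : (0:ℝ) < (2*(m:ℝ))^m := by positivity
      nlinarith
    have hexp : Real.exp (-((m:ℝ)+1)/2) = Real.exp (-(m:ℝ)/2) * Real.exp (-(1/2):ℝ) := by
      rw [← Real.exp_add]; ring_nf
    have h1 : (odf (m+1) : ℝ) ≤ (2*(m:ℝ)+1) * ((2*(m:ℝ))^m * Real.exp (-(m:ℝ)/2)) := by
      rw [hodf]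
      apply mul_le_mul_of_nonneg_left ih (by linarith)
    have h2 : (2*(m:ℝ)+1) * (2*(m:ℝ))^m ≤ (2*((m:ℝ)+1))^(m+1) * Real.exp (-(1/2):ℝ) := by
      have hh := exp_neg_half_ge
      have hstep : (2*((m:ℝ)+1))^(m+1) = (2*(m:ℝ)+2) * (2*(m:ℝ)+2)^m := by
        rw [pow_succ]; ring_nf
      rw [hstep]
      have hp : (0:ℝ) < (2*(m:ℝ))^m := by positivity
      have hq : (0:ℝ) ≤ (2*(m:ℝ)+2)^m := pow_nonneg (by linarith) m
      calc (2*(m:ℝ)+1) * (2*(m:ℝ))^m ≤ ((2*(m:ℝ)+2) * (2*(2*(m:ℝ))^m)) * (1/2) := by nlinarith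
        _ ≤ ((2*(m:ℝ)+2) * (2*(m:ℝ)+2)^m) * (1/2) := by nlinarith
        _ ≤ ((2*(m:ℝ)+2) * (2*(m:ℝ)+2)^m) * Real.exp (-(1/2):ℝ) := by
            apply mul_le_mul_of_nonneg_left hh
            positivity
    calc (odf (m+1) : ℝ) ≤ (2*(m:ℝ)+1) * ((2*(m:ℝ))^m * Real.exp (-(m:ℝ)/2)) := h1
      _ = ((2*(m:ℝ)+1) * (2*(m:ℝ))^m) * Real.exp (-(m:ℝ)/2) := by ring
      _ ≤ ((2*((m:ℝ)+1))^(m+1) * Real.exp (-(1/2):ℝ)) * Real.exp (-(m:ℝ)/2) := by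
          apply mul_le_mul_of_nonneg_right h2 (le_of_lt (Real.exp_pos _))
      _ = (2*((m:ℝ)+1))^(m+1) * Real.exp (-((m:ℝ)+1)/2) := by
          rw [hexp]; ring
      _ = (2*((m+1:ℕ):ℝ))^(m+1) * Real.exp (-((m+1:ℕ):ℝ)/2) := by push_cast; ring_nf


lemma exp_half_le_two' : Real.exp ((1:ℝ)/2) ≤ 2 := by
  have := Real.log_two_gt_d9
  calc Real.exp ((1:ℝ)/2) ≤ Real.exp (Real.log 2) := by
        apply Real.exp_le_exp.mpr; linarith
    _ = 2 := Real.exp_log (by norm_num)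

def oddSupp {k n : ℕ} (f : Fin k → Fin n) : Finset (Fin n) :=
  univ.filter fun i => ¬ Even (univ.filter fun j => f j = i).card

lemma prod_pm_eq {n k : ℕ} (f : Fin k → Fin n) (x : Fin n → Bool) :
    ∏ j, pm (x (f j)) = ∏ i ∈ oddSupp f, pm (x i) := by
  rw [← Finset.prod_fiberwise univ f (fun j => pm (x (f j)))]
  rw [oddSupp, prod_filter]
  apply Finset.prod_congr rfl
  intro i _
  have h1 : ∏ j ∈ univ.filter (fun j => f j = i), pm (x (f j))
      = pm (x i) ^ (univ.filter (fun j => f j = i)).card := by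
    rw [Finset.prod_congr rfl (fun j hj => by rw [(mem_filter.mp hj).2]), prod_const]
  rw [h1, pm_pow]
  by_cases h : Even (univ.filter (fun j => f j = i)).card <;> simp [h]

lemma prod_v_nonneg {n k : ℕ} (v : Fin n → ℝ) (f : Fin k → Fin n)
    (h : oddSupp f = ∅) : 0 ≤ ∏ j, v (f j) := by
  rw [← Finset.prod_fiberwise univ f (fun j => v (f j))]
  apply Finset.prod_nonneg
  intro i _
  have h1 : ∏ j ∈ univ.filter (fun j => f j = i), v (f j)
      = v i ^ (univ.filter (fun j => f j = i)).card := by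
    rw [Finset.prod_congr rfl (fun j hj => by rw [(mem_filter.mp hj).2]), prod_const]
  rw [h1]
  have heven : Even (univ.filter (fun j => f j = i)).card := by
    by_contra hc
    have : i ∈ oddSupp f := by rw [oddSupp, mem_filter]; exact ⟨mem_univ _, hc⟩
    rw [h] at this; exact absurd this (notMem_empty _)
  exact heven.pow_nonneg _

lemma expand {n : ℕ} (k : ℕ) (v : Fin n → ℝ) (w : (Fin n → Bool) → ℝ) :
    ∑ x, w x * (∑ i, v i * pm (x i))^k
      = ∑ f : Fin k → Fin n, (∏ j, v (f j)) * ∑ x, w x * ∏ i ∈ oddSupp f, pm (x i) := by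
  have h1 : ∀ x : Fin n → Bool, (∑ i, v i * pm (x i))^k
      = ∑ f : Fin k → Fin n, (∏ j, v (f j)) * ∏ i ∈ oddSupp f, pm (x i) := by
    intro x
    rw [Fintype.sum_pow (fun i => v i * pm (x i)) k]
    apply Finset.sum_congr rfl
    intro f _
    rw [Finset.prod_mul_distrib, prod_pm_eq]
  simp_rw [h1, Finset.mul_sum]
  rw [Finset.sum_comm]
  apply Finset.sum_congr rfl
  intro f _
  exact Finset.sum_congr rfl fun x _ => by ring

lemma vanish {n : ℕ} (S : Finset (Fin n)) (hS : S.Nonempty) :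
    ∑ x : Fin n → Bool, ∏ i ∈ S, pm (x i) = 0 := by
  classical
  obtain ⟨i0, hi0⟩ := hS
  set e : (Fin n → Bool) → (Fin n → Bool) := fun x => Function.update x i0 (!(x i0)) with he
  have hinv : Function.Involutive e := by
    intro x; funext i
    by_cases h : i = i0 <;> simp [he, Function.update_apply, h]
  have hneg : ∀ x, ∏ i ∈ S, pm (e x i) = - ∏ i ∈ S, pm (x i) := by
    intro x
    rw [← Finset.mul_prod_erase S (fun i => pm (e x i)) hi0,
        ← Finset.mul_prod_erase S (fun i => pm (x i)) hi0]
    have h1 : pm (e x i0) = - pm (x i0) := by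
      rw [show e x i0 = !(x i0) by simp [he, Function.update_apply], pm_not]
    have h2 : ∀ i ∈ S.erase i0, pm (e x i) = pm (x i) := by
      intro i hi
      have hne := Finset.ne_of_mem_erase hi
      rw [show e x i = x i by simp [he, Function.update_apply, hne]]
    rw [Finset.prod_congr rfl h2, h1]
    ring
  have hsum : ∑ x : Fin n → Bool, ∏ i ∈ S, pm (x i)
      = ∑ x : Fin n → Bool, ∏ i ∈ S, pm (e x i) :=
    (Equiv.sum_comp (Function.Involutive.toPerm e hinv)
      (fun x => ∏ i ∈ S, pm (x i))).symm
  simp_rw [hneg] at hsum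
  rw [Finset.sum_neg_distrib] at hsum
  linarith

lemma sum_even_range (m : ℕ) (g : ℕ → ℝ) (h : ∀ j, Odd j → g j = 0) :
    ∑ j ∈ range (2*m+1), g j = ∑ l ∈ range (m+1), g (2*l) := by
  induction m with
  | zero => simp
  | succ m ih =>
    have e1 : 2*(m+1)+1 = (2*m+1)+1+1 := by ring
    rw [e1, Finset.sum_range_succ, Finset.sum_range_succ, ih, h (2*m+1) ⟨m, by ring⟩,
        Finset.sum_range_succ]
    have e2 : 2*m+1+1 = 2*(m+1) := by ring
    rw [e2, Finset.sum_range_succ, Finset.sum_range_succ]; ring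

lemma khintchine (n : ℕ) (v : Fin n → ℝ) (m : ℕ) :
    ∑ x : Fin n → Bool, (∑ i, v i * pm (x i)) ^ (2*m)
      ≤ 2^n * (odf m : ℝ) * (∑ i, v i ^ 2)^m := by
  induction n generalizing m with
  | zero =>
    have h0 : ∀ x : Fin 0 → Bool, ∑ i, v i * pm (x i) = 0 := by intro x; simp
    simp only [h0]
    cases m with
    | zero => simp [odf]
    | succ m =>
      have h1 : (0:ℝ) ^ (2*(m+1)) = 0 := by
        apply zero_pow; omega
      have h2 : (0:ℝ) ^ (m+1) = 0 := by apply zero_pow; omega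
      simp [h1, h2]
  | succ n ih =>
    set a := v 0 with ha
    set u : Fin n → ℝ := fun i => v i.succ with hu
    set W : (Fin n → Bool) → ℝ := fun y => ∑ i, u i * pm (y i) with hW
    set σ : ℝ := ∑ i, u i ^ 2 with hσdef
    have hσ : 0 ≤ σ := Finset.sum_nonneg fun i _ => sq_nonneg _
    set N := 2*m with hN
    have key : ∀ (b : Bool) (y : Fin n → Bool),
        ∑ i, v i * pm ((Fin.cons b y : Fin (n+1) → Bool) i) = a * pm b + W y := by
      intro b y
      rw [Fin.sum_univ_succ]
      simp [Fin.cons_zero, Fin.cons_succ, hW, hu, ha, mul_comm]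
    have hre : ∑ x : Fin (n+1) → Bool, (∑ i, v i * pm (x i)) ^ N
        = ∑ y : Fin n → Bool, ((W y + a) ^ N + (W y - a) ^ N) := by
      rw [← Equiv.sum_comp (Fin.consEquiv (fun _ : Fin (n+1) => Bool))
            (fun x => (∑ i, v i * pm (x i)) ^ N),
          Fintype.sum_prod_type, Fintype.sum_bool, ← Finset.sum_add_distrib]
      apply Finset.sum_congr rfl
      intro y _
      have e1 : ∀ b, (Fin.consEquiv (fun _ : Fin (n+1) => Bool)) (b, y) = Fin.cons b y :=
        fun b => rfl
      have e2 : ∀ b, (∑ i, v i * pm ((Fin.consEquiv (fun _ : Fin (n+1) => Bool)) (b, y) i)) ^ N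
          = (a * pm b + W y) ^ N := by
        intro b
        show (∑ i, v i * pm ((Fin.cons b y : Fin (n+1) → Bool) i)) ^ N = _
        rw [key b y]
      rw [e2 true, e2 false]
      have : pm true = 1 ∧ pm false = -1 := by constructor <;> simp [pm]
      rw [this.1, this.2]
      ring_nf
    set g : ℕ → ℝ := fun j => (N.choose j : ℝ) * (a^(N-j) + (-a)^(N-j)) * ∑ y, (W y)^j
      with hg
    have hbin : ∀ y, (W y + a)^N + (W y - a)^N
        = ∑ j ∈ range (N+1), (W y)^j * (a^(N-j) + (-a)^(N-j)) * (N.choose j : ℝ) := by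
      intro y
      rw [sub_eq_add_neg, add_pow, add_pow, ← Finset.sum_add_distrib]
      exact Finset.sum_congr rfl fun j _ => by ring
    have hswap : ∑ y : Fin n → Bool, ((W y + a)^N + (W y - a)^N)
        = ∑ j ∈ range (N+1), g j := by
      simp_rw [hbin]
      rw [Finset.sum_comm]
      apply Finset.sum_congr rfl
      intro j _
      simp only [hg]
      rw [Finset.mul_sum]
      exact Finset.sum_congr rfl fun y _ => by ring
    have hodd : ∀ j, Odd j → g j = 0 := by
      intro j hj
      rcases le_or_gt j N with hle | hlt
      · have hoddNj : Odd (N - j) := Nat.Even.sub_odd hle (even_two_mul m) hj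
        have : (-a)^(N-j) = -(a^(N-j)) := hoddNj.neg_pow a
        simp only [hg]
        rw [this]
        ring
      · have : N.choose j = 0 := Nat.choose_eq_zero_of_lt hlt
        simp only [hg]
        rw [this]
        push_cast
        ring
    have hterm : ∀ l ∈ range (m+1), g (2*l)
        ≤ 2^(n+1) * (odf m : ℝ) * (σ^l * (a^2)^(m-l) * (m.choose l : ℝ)) := by
      intro l hl
      have hlm : l ≤ m := Nat.lt_succ_iff.mp (mem_range.mp hl)
      have hS : ∑ y, (W y)^(2*l) ≤ 2^n * (odf l : ℝ) * σ^l := ih u l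
      have hC : ((2*m).choose (2*l) : ℝ) * (odf l : ℝ) ≤ (odf m : ℝ) * (m.choose l : ℝ) := by
        exact_mod_cast comb_le m l hlm
      have hNe : N - 2*l = 2*(m-l) := by omega
      have hpow : a^(N-2*l) + (-a)^(N-2*l) = 2*(a^2)^(m-l) := by
        rw [hNe, Even.neg_pow (even_two_mul _), pow_mul]; ring
      have hg2 : g (2*l) = ((N.choose (2*l)) : ℝ) * (2*(a^2)^(m-l)) * ∑ y, (W y)^(2*l) := by
        simp only [hg]; rw [hpow]
      have hnn1 : (0:ℝ) ≤ ((N.choose (2*l)) : ℝ) * (2*(a^2)^(m-l)) := by positivity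
      calc g (2*l) = ((N.choose (2*l)) : ℝ) * (2*(a^2)^(m-l)) * ∑ y, (W y)^(2*l) := hg2
        _ ≤ ((N.choose (2*l)) : ℝ) * (2*(a^2)^(m-l)) * (2^n * (odf l : ℝ) * σ^l) :=
            mul_le_mul_of_nonneg_left hS hnn1
        _ = (2^n * 2 * (a^2)^(m-l) * σ^l) * (((2*m).choose (2*l) : ℝ) * (odf l : ℝ)) := by
            rw [hN]; ring
        _ ≤ (2^n * 2 * (a^2)^(m-l) * σ^l) * ((odf m : ℝ) * (m.choose l : ℝ)) := by
            apply mul_le_mul_of_nonneg_left hC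
            positivity
        _ = 2^(n+1) * (odf m : ℝ) * (σ^l * (a^2)^(m-l) * (m.choose l : ℝ)) := by ring
    calc ∑ x : Fin (n+1) → Bool, (∑ i, v i * pm (x i)) ^ (2*m)
        = ∑ y : Fin n → Bool, ((W y + a)^N + (W y - a)^N) := hre
      _ = ∑ j ∈ range (N+1), g j := hswap
      _ = ∑ l ∈ range (m+1), g (2*l) := by rw [hN]; exact sum_even_range m g hodd
      _ ≤ ∑ l ∈ range (m+1), 2^(n+1) * (odf m : ℝ) * (σ^l * (a^2)^(m-l) * (m.choose l : ℝ)) :=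
          Finset.sum_le_sum hterm
      _ = 2^(n+1) * (odf m : ℝ) * (σ + a^2)^m := by
          rw [add_pow, Finset.mul_sum]
      _ = 2^(n+1) * (odf m : ℝ) * (∑ i : Fin (n+1), v i ^ 2)^m := by
          rw [Fin.sum_univ_succ]
          congr 1
          rw [ha, hσdef, hu]
          ring_nf

theorem stmt2 (n : ℕ) (v : Fin n → ℝ) (hv : ∑ i, v i ^ 2 = 1)
    (ε : ℝ) (μ : (Fin n → Bool) → ℝ) (hμ0 : ∀ x, 0 ≤ μ x) (hμ1 : ∑ x, μ x = 1)
    (hbias : ∀ S : Finset (Fin n), S.Nonempty →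
      |∑ x, μ x * ∏ i ∈ S, pm (x i)| ≤ ε)
    (t : ℝ) (ht : 1 ≤ t) :
    ∑ x, μ x * (if t < |∑ i, v i * pm (x i)| then (1:ℝ) else 0) ≤
      2 * Real.exp (-t ^ 2 / 4)
        + ((univ.filter fun i => v i ≠ 0).card : ℝ) ^ (t ^ 2) * ε := by
  classical
  obtain ⟨i0, hi0⟩ : ∃ i, v i ≠ 0 := by
    by_contra h
    push_neg at h
    have h0 : ∑ i, v i ^ 2 = 0 := Finset.sum_eq_zero fun i _ => by rw [h i]; ring
    rw [hv] at h0
    norm_num at h0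
  have hε : 0 ≤ ε :=
    le_trans (abs_nonneg _) (hbias {i0} ⟨i0, mem_singleton_self i0⟩)
  set s : ℕ := (univ.filter fun i => v i ≠ 0).card with hs
  have hs1 : 1 ≤ s :=
    Finset.card_pos.mpr ⟨i0, mem_filter.mpr ⟨mem_univ _, hi0⟩⟩
  have hsR : (1:ℝ) ≤ (s:ℝ) := by exact_mod_cast hs1
  have hrp : 0 ≤ ((s:ℝ)) ^ (t^2) := Real.rpow_nonneg (by positivity) _
  have ht0 : (0:ℝ) < t := lt_of_lt_of_le one_pos ht
  by_cases hcase : Real.exp (t^2/4) ≤ 2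
  · -- trivial case
    have h1 : ∑ x, μ x * (if t < |∑ i, v i * pm (x i)| then (1:ℝ) else 0) ≤ ∑ x, μ x := by
      apply Finset.sum_le_sum
      intro x _
      by_cases h : t < |∑ i, v i * pm (x i)|
      · rw [if_pos h, mul_one]
      · rw [if_neg h, mul_zero]; exact hμ0 x
    have hepos : (0:ℝ) < Real.exp (t^2/4) := Real.exp_pos _
    have h2 : (1:ℝ) ≤ 2 * Real.exp (-t^2/4) := by
      have hid : Real.exp (-t^2/4) = (Real.exp (t^2/4))⁻¹ := by
        rw [← Real.exp_neg]; ring_nf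
      rw [hid]
      calc (1:ℝ) = Real.exp (t^2/4) * (Real.exp (t^2/4))⁻¹ :=
            (mul_inv_cancel₀ (ne_of_gt hepos)).symm
        _ ≤ 2 * (Real.exp (t^2/4))⁻¹ :=
            mul_le_mul_of_nonneg_right hcase (by positivity)
    rw [hμ1] at h1
    have := mul_nonneg hrp hε
    linarith
  · -- main case
    push_neg at hcase
    have hlog2 : (0.6931471803:ℝ) < Real.log 2 := Real.log_two_gt_d9
    have ht2 : (4:ℝ) * Real.log 2 < t^2 := by
      have hl := Real.log_lt_log (by positivity) hcase
      rw [Real.log_exp] at hl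
      linarith
    have ht2' : (2:ℝ) < t^2 := by nlinarith
    set m : ℕ := ⌊t^2/2⌋₊ with hm
    have hm1 : 1 ≤ m := Nat.le_floor (by linarith : ((1:ℕ):ℝ) ≤ t^2/2)
    have hmR : (1:ℝ) ≤ (m:ℝ) := by exact_mod_cast hm1
    have h2m : (2*(m:ℝ)) ≤ t^2 := by
      have h := Nat.floor_le (by positivity : (0:ℝ) ≤ t^2/2)
      rw [← hm] at h
      linarith
    have h2m' : t^2 < 2*(m:ℝ) + 2 := by
      have h := Nat.lt_floor_add_one (t^2/2)
      rw [← hm] at h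
      linarith
    set Z : (Fin n → Bool) → ℝ := fun x => ∑ i, v i * pm (x i) with hZ
    have htpow : (1:ℝ) ≤ t^(2*m) := one_le_pow₀ ht
    have htpow0 : (0:ℝ) < t^(2*m) := by positivity
    -- Markov
    have hmark : ∑ x, μ x * (if t < |Z x| then (1:ℝ) else 0)
        ≤ (∑ x, μ x * (Z x)^(2*m)) / t^(2*m) := by
      rw [Finset.sum_div]
      apply Finset.sum_le_sum
      intro x _
      rw [mul_div_assoc]
      apply mul_le_mul_of_nonneg_left _ (hμ0 x)
      by_cases h : t < |Z x|
      · rw [if_pos h, le_div_iff₀ htpow0, one_mul]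
        calc t^(2*m) ≤ |Z x|^(2*m) := pow_le_pow_left₀ (le_of_lt ht0) (le_of_lt h) _
          _ = (Z x)^(2*m) := (even_two_mul m).pow_abs (Z x)
      · rw [if_neg h]
        exact div_nonneg ((even_two_mul m).pow_nonneg _) (le_of_lt htpow0)
    -- comparison with uniform
    set wU : (Fin n → Bool) → ℝ := fun _ => ((2:ℝ)^n)⁻¹ with hwU
    have hcard : (Fintype.card (Fin n → Bool) : ℝ) = 2^n := by
      rw [Fintype.card_fun]
      simp
    have habsf : ∑ f : Fin (2*m) → Fin n, |∏ j, v (f j)| = (∑ i, |v i|)^(2*m) := by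
      rw [Fintype.sum_pow (fun i => |v i|) (2*m)]
      exact Finset.sum_congr rfl fun f _ => Finset.abs_prod _ _
    have hEU : ∑ x, μ x * (Z x)^(2*m)
        ≤ ∑ x, wU x * (Z x)^(2*m) + ε * (∑ i, |v i|)^(2*m) := by
      have hP : ∀ f : Fin (2*m) → Fin n,
          |(∑ x, μ x * ∏ i ∈ oddSupp f, pm (x i))
            - (∑ x, wU x * ∏ i ∈ oddSupp f, pm (x i))| ≤ ε := by
        intro f
        by_cases hf : (oddSupp f).Nonempty
        · have hPf := hbias (oddSupp f) hf
          have hQf : ∑ x, wU x * ∏ i ∈ oddSupp f, pm (x i) = 0 := by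
            rw [← Finset.mul_sum, vanish _ hf, mul_zero]
          rw [hQf, sub_zero]
          exact hPf
        · rw [not_nonempty_iff_eq_empty] at hf
          rw [hf]
          simp only [Finset.prod_empty, mul_one]
          rw [hμ1, Finset.sum_const, Finset.card_univ, nsmul_eq_mul, hcard,
            mul_inv_cancel₀ (by positivity : ((2:ℝ)^n) ≠ 0)]
          simp [hε]
      have hdiff : (∑ x, μ x * (Z x)^(2*m)) - (∑ x, wU x * (Z x)^(2*m))
          = ∑ f : Fin (2*m) → Fin n, (∏ j, v (f j)) *
              ((∑ x, μ x * ∏ i ∈ oddSupp f, pm (x i))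
                - (∑ x, wU x * ∏ i ∈ oddSupp f, pm (x i))) := by
        rw [hZ]
        rw [expand (2*m) v μ, expand (2*m) v wU, ← Finset.sum_sub_distrib]
        exact Finset.sum_congr rfl fun f _ => by ring
      have habs : (∑ x, μ x * (Z x)^(2*m)) - (∑ x, wU x * (Z x)^(2*m))
          ≤ ε * (∑ i, |v i|)^(2*m) := by
        rw [hdiff]
        calc ∑ f : Fin (2*m) → Fin n, (∏ j, v (f j)) *
              ((∑ x, μ x * ∏ i ∈ oddSupp f, pm (x i))
                - (∑ x, wU x * ∏ i ∈ oddSupp f, pm (x i)))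
            ≤ ∑ f : Fin (2*m) → Fin n, |∏ j, v (f j)| * ε := by
              apply Finset.sum_le_sum
              intro f _
              calc (∏ j, v (f j)) *
                    ((∑ x, μ x * ∏ i ∈ oddSupp f, pm (x i))
                      - (∑ x, wU x * ∏ i ∈ oddSupp f, pm (x i)))
                  ≤ |(∏ j, v (f j)) *
                    ((∑ x, μ x * ∏ i ∈ oddSupp f, pm (x i))
                      - (∑ x, wU x * ∏ i ∈ oddSupp f, pm (x i)))| := le_abs_self _
                _ = |∏ j, v (f j)| *
                    |(∑ x, μ x * ∏ i ∈ oddSupp f, pm (x i))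
                      - (∑ x, wU x * ∏ i ∈ oddSupp f, pm (x i))| := abs_mul _ _
                _ ≤ |∏ j, v (f j)| * ε :=
                    mul_le_mul_of_nonneg_left (hP f) (abs_nonneg _)
          _ = ε * (∑ i, |v i|)^(2*m) := by
              rw [← Finset.sum_mul, habsf]; ring
      linarith
    -- uniform bound
    have hU : ∑ x, wU x * (Z x)^(2*m) ≤ (odf m : ℝ) := by
      have hk := khintchine n v m
      rw [hv, one_pow, mul_one] at hk
      have h2eq : ((2:ℝ)^n)⁻¹ * (2^n * (odf m : ℝ)) = (odf m : ℝ) := by field_simp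
      simp only [hwU, hZ]
      rw [← Finset.mul_sum, ← h2eq]
      exact mul_le_mul_of_nonneg_left hk (by positivity)
    -- l1 bound
    have hl1 : (∑ i, |v i|)^(2*m) ≤ (s:ℝ)^m := by
      have e1 : ∑ i ∈ univ.filter (fun i => v i ≠ 0), |v i| = ∑ i, |v i| := by
        apply Finset.sum_filter_of_ne
        intro i _ hne
        exact fun h => hne (by rw [h, abs_zero])
      have e2 : ∑ i ∈ univ.filter (fun i => v i ≠ 0), |v i| ^ 2 = 1 := by
        have e2' : ∑ i ∈ univ.filter (fun i => v i ≠ 0), v i ^ 2 = ∑ i, v i ^ 2 := by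
          apply Finset.sum_filter_of_ne
          intro i _ hne
          exact fun h => hne (by rw [h]; norm_num)
        simp_rw [sq_abs]
        rw [e2', hv]
      have e3 : (∑ i, |v i|)^2 ≤ (s:ℝ) := by
        rw [← e1]
        calc (∑ i ∈ univ.filter (fun i => v i ≠ 0), |v i|)^2
            ≤ ((univ.filter (fun i => v i ≠ 0)).card : ℝ) *
                ∑ i ∈ univ.filter (fun i => v i ≠ 0), |v i| ^ 2 :=
              sq_sum_le_card_mul_sum_sq
          _ = (s:ℝ) := by rw [e2, hs, mul_one]
      calc (∑ i, |v i|)^(2*m) = ((∑ i, |v i|)^2)^m := by rw [← pow_mul]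
        _ ≤ (s:ℝ)^m := pow_le_pow_left₀ (sq_nonneg _) e3 m
    -- exponential bound
    have hodf : (odf m : ℝ) / t^(2*m) ≤ 2 * Real.exp (-t^2/4) := by
      have h1 : (odf m : ℝ) ≤ (2*(m:ℝ))^m * Real.exp (-(m:ℝ)/2) := odf_le_real m hm1
      have h2 : (2*(m:ℝ))^m ≤ t^(2*m) := by
        rw [pow_mul]
        apply pow_le_pow_left₀ (by positivity)
        nlinarith
      have h3 : Real.exp (-(m:ℝ)/2) ≤ 2 * Real.exp (-t^2/4) := by
        have hee : Real.exp (-(m:ℝ)/2) ≤ Real.exp (-t^2/4 + 1/2) := by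
          apply Real.exp_le_exp.mpr
          linarith
        rw [Real.exp_add] at hee
        calc Real.exp (-(m:ℝ)/2) ≤ Real.exp (-t^2/4) * Real.exp ((1:ℝ)/2) := hee
          _ ≤ Real.exp (-t^2/4) * 2 :=
              mul_le_mul_of_nonneg_left exp_half_le_two' (le_of_lt (Real.exp_pos _))
          _ = 2 * Real.exp (-t^2/4) := by ring
      rw [div_le_iff₀ htpow0]
      calc (odf m : ℝ) ≤ (2*(m:ℝ))^m * Real.exp (-(m:ℝ)/2) := h1
        _ ≤ t^(2*m) * Real.exp (-(m:ℝ)/2) :=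
            mul_le_mul_of_nonneg_right h2 (le_of_lt (Real.exp_pos _))
        _ ≤ t^(2*m) * (2 * Real.exp (-t^2/4)) :=
            mul_le_mul_of_nonneg_left h3 (le_of_lt htpow0)
        _ = 2 * Real.exp (-t^2/4) * t^(2*m) := by ring
    -- rpow bound
    have hrpow : (s:ℝ)^m ≤ (s:ℝ) ^ (t^2) := by
      rw [← Real.rpow_natCast (s:ℝ) m]
      apply Real.rpow_le_rpow_of_exponent_le hsR
      nlinarith
    have hEnn : 0 ≤ (∑ i, |v i|)^(2*m) :=
      pow_nonneg (Finset.sum_nonneg fun i _ => abs_nonneg _) _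
    -- assemble
    calc ∑ x, μ x * (if t < |Z x| then (1:ℝ) else 0)
        ≤ (∑ x, μ x * (Z x)^(2*m)) / t^(2*m) := hmark
      _ ≤ ((odf m : ℝ) + ε * (∑ i, |v i|)^(2*m)) / t^(2*m) := by
          exact (div_le_div_iff_of_pos_right htpow0).mpr (by linarith)
      _ = (odf m : ℝ) / t^(2*m) + ε * (∑ i, |v i|)^(2*m) / t^(2*m) := by ring
      _ ≤ 2 * Real.exp (-t^2/4) + (s:ℝ) ^ (t^2) * ε := by
          have ha : ε * (∑ i, |v i|)^(2*m) / t^(2*m) ≤ ε * (∑ i, |v i|)^(2*m) :=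
            div_le_self (mul_nonneg hε hEnn) htpow
          have hb : ε * (∑ i, |v i|)^(2*m) ≤ ε * (s:ℝ)^m :=
            mul_le_mul_of_nonneg_left hl1 hε
          have hc : ε * (s:ℝ)^m ≤ ε * (s:ℝ)^(t^2) :=
            mul_le_mul_of_nonneg_left hrpow hε
          have hd := hodf
          linarith
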